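/- Let (x,y) ∈ W and let δ denote the Dirac measure at ι(x,y) on K. Then: (i) for every finite positive Radon Borel measure μ on K satisfying ∫ Φf dμ = (f(x) − f(y))/d(x,y) for all Lipschitz f : M → ℝ with f(0) = 0, one has δ ≼ μ; (ii) δ is minimal; (iii) δ is the unique such minimal representation: if μ is a minimal finite positive Radon Borel measure on K with ∫ Φf dμ = (f(x) − f(y))/d(x,y) for all Lipschitz f : M → ℝ with f(0) = 0, then μ = δ. -/

import Mathlib

open MeasureTheory

/-- `Wt M` is the set `W = {(x,y) ∈ M × M : x ≠ y}`, a topological subspace of `M × M`. -/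
abbrev Wt (M : Type*) [MetricSpace M] := {p : M × M // p.1 ≠ p.2}

/-- `g : W → ℝ` satisfies the G-inequality. -/
def GIneq {M : Type*} [MetricSpace M] (g : Wt M → ℝ) : Prop :=
  ∀ (x u y : M) (hxu : x ≠ u) (huy : u ≠ y) (hxy : x ≠ y),
    dist x y * g ⟨(x, y), hxy⟩ ≤ dist x u * g ⟨(x, u), hxu⟩ + dist u y * g ⟨(u, y), huy⟩

/-- The cone `G` of continuous functions on `K = βW` satisfying the G-inequality
on points of `W`. -/
def GSet (M : Type*) [MetricSpace M] : Set (StoneCech (Wt M) → ℝ) :=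
  {g | Continuous g ∧ GIneq fun p => g (stoneCechUnit p)}

/-- The Choquet-like quasi-order `μ ≼ ν`. -/
def Preceq {M : Type*} [MetricSpace M] [MeasurableSpace (StoneCech (Wt M))]
    (μ ν : Measure (StoneCech (Wt M))) : Prop :=
  ∀ g ∈ GSet M, ∫ ζ, g ζ ∂μ ≤ ∫ ζ, g ζ ∂ν

/-- `μ` is `≼`-minimal among finite positive Radon Borel measures. -/
def IsMinimal {M : Type*} [MetricSpace M] [MeasurableSpace (StoneCech (Wt M))]
    (μ : Measure (StoneCech (Wt M))) : Prop :=
  ∀ ν : Measure (StoneCech (Wt M)),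
    IsFiniteMeasure ν → ν.InnerRegular → Preceq ν μ → Preceq μ ν

/-- `μ` is a De Leeuw representation of the elementary molecule `m_{xy}`, `p = (x,y)`:
`∫ Φf dμ = (f x − f y)/d(x,y)` for every base-point-normalised Lipschitz `f`, where `Φf`
is the unique continuous extension to `βW` of `(u,v) ↦ (f u − f v)/d(u,v)`. -/
def RepresentsMolecule {M : Type*} [MetricSpace M] [MeasurableSpace (StoneCech (Wt M))]
    (basept : M) (p : Wt M) (μ : Measure (StoneCech (Wt M))) : Prop :=
  ∀ f : M → ℝ, (∃ C : NNReal, LipschitzWith C f) → f basept = 0 →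
    ∀ F : StoneCech (Wt M) → ℝ, Continuous F →
      (∀ q : Wt M, F (stoneCechUnit q) = (f q.1.1 - f q.1.2) / dist q.1.1 q.1.2) →
      ∫ ζ, F ζ ∂μ = (f p.1.1 - f p.1.2) / dist p.1.1 p.1.2

open Filter

section Stmt19Aux

variable {M : Type*} [MetricSpace M]

theorem aux_exists_ext (f : M → ℝ) (C : NNReal) (hf : LipschitzWith C f) :
    ∃ F : StoneCech (Wt M) → ℝ, Continuous F ∧
      ∀ q : Wt M, F (stoneCechUnit q) = (f q.1.1 - f q.1.2) / dist q.1.1 q.1.2 := by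
  have hd : ∀ q : Wt M, (0:ℝ) < dist q.1.1 q.1.2 := fun q => dist_pos.2 q.2
  set φ : Wt M → ℝ := fun q => (f q.1.1 - f q.1.2) / dist q.1.1 q.1.2 with hφdef
  have hcont : Continuous φ := by
    apply Continuous.div
    · exact (hf.continuous.comp (continuous_fst.comp continuous_subtype_val)).sub
        (hf.continuous.comp (continuous_snd.comp continuous_subtype_val))
    · exact (continuous_fst.comp continuous_subtype_val).dist
        (continuous_snd.comp continuous_subtype_val)
    · exact fun q => (hd q).ne'
  have hmem : ∀ q, φ q ∈ Set.Icc (-(C:ℝ)) (C:ℝ) := by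
    intro q
    rw [Set.mem_Icc, ← abs_le, abs_div, abs_of_pos (hd q), div_le_iff₀ (hd q)]
    have := hf.dist_le_mul q.1.1 q.1.2
    rwa [Real.dist_eq] at this
  haveI : CompactSpace (Set.Icc (-(C:ℝ)) (C:ℝ)) := isCompact_iff_compactSpace.mp isCompact_Icc
  have hcont' : Continuous (fun q => (⟨φ q, hmem q⟩ : Set.Icc (-(C:ℝ)) (C:ℝ))) :=
    hcont.subtype_mk _
  set E : StoneCech (Wt M) → Set.Icc (-(C:ℝ)) (C:ℝ) := stoneCechExtend hcont' with hE
  refine ⟨fun ζ => (E ζ : ℝ),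
    continuous_subtype_val.comp (continuous_stoneCechExtend hcont'), fun q => ?_⟩
  exact congrArg Subtype.val (congrFun (stoneCechExtend_extends hcont') q)

theorem aux_third (h3 : ∃ x y z : M, x ≠ y ∧ x ≠ z ∧ y ≠ z) (u v : M) :
    ∃ a : M, a ≠ u ∧ a ≠ v := by
  obtain ⟨a, b, c, hab, hac, hbc⟩ := h3
  by_cases hau : a = u
  · subst hau
    by_cases hbv : b = v
    · subst hbv; exact ⟨c, Ne.symm hac, Ne.symm hbc⟩
    · exact ⟨b, Ne.symm hab, hbv⟩
  · by_cases hav : a = v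
    · subst hav
      by_cases hbu : b = u
      · subst hbu; exact ⟨c, Ne.symm hbc, Ne.symm hac⟩
      · exact ⟨b, hbu, Ne.symm hab⟩
    · exact ⟨a, hau, hav⟩

theorem aux_gA (h3 : ∃ x y z : M, x ≠ y ∧ x ≠ z ∧ y ≠ z) {g : Wt M → ℝ} (hg : GIneq g)
    {u v : M} (h : u ≠ v) : 0 ≤ g ⟨(u, v), h⟩ + g ⟨(v, u), Ne.symm h⟩ := by
  obtain ⟨a, hau, hav⟩ := aux_third h3 u v
  have h1 := hg u v a h (Ne.symm hav) (Ne.symm hau)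
  have h2 := hg v u a (Ne.symm h) (Ne.symm hau) (Ne.symm hav)
  rw [dist_comm v u] at h2
  have hd : (0:ℝ) < dist u v := dist_pos.2 h
  have key : 0 ≤ dist u v * (g ⟨(u, v), h⟩ + g ⟨(v, u), Ne.symm h⟩) := by
    rw [mul_add]; linarith
  exact nonneg_of_mul_nonneg_right key hd

theorem aux_le_of_unit {F G : StoneCech (Wt M) → ℝ} (hF : Continuous F) (hG : Continuous G)
    (h : ∀ q : Wt M, F (stoneCechUnit q) ≤ G (stoneCechUnit q)) : ∀ ζ, F ζ ≤ G ζ := by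
  have hcl : IsClosed {ζ : StoneCech (Wt M) | F ζ ≤ G ζ} := isClosed_le hF hG
  have hsub : Set.univ ⊆ {ζ : StoneCech (Wt M) | F ζ ≤ G ζ} := by
    rw [← denseRange_stoneCechUnit.closure_range]
    exact hcl.closure_subset_iff.2 (Set.range_subset_iff.2 h)
  exact fun ζ => hsub (Set.mem_univ ζ)

theorem aux_part1 [MeasurableSpace (StoneCech (Wt M))] [BorelSpace (StoneCech (Wt M))]
    (basept : M) (h3 : ∃ x y z : M, x ≠ y ∧ x ≠ z ∧ y ≠ z) (p : Wt M)
    (μ : Measure (StoneCech (Wt M))) (hfin : IsFiniteMeasure μ)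
    (hrep : RepresentsMolecule basept p μ) :
    Preceq (Measure.dirac (stoneCechUnit p)) μ := by
  classical
  rintro g ⟨hgc, hgG⟩
  rw [integral_dirac' g _ hgc.stronglyMeasurable]
  have hxy : p.1.1 ≠ p.1.2 := p.2
  set x := p.1.1 with hx
  set y := p.1.2 with hy
  have hD : (0:ℝ) < dist x y := dist_pos.2 hxy
  obtain ⟨C, hC⟩ := isCompact_univ.exists_bound_of_continuousOn hgc.continuousOn
  have hC' : ∀ ζ, |g ζ| ≤ C := fun ζ => by
    have := hC ζ (Set.mem_univ ζ); rwa [Real.norm_eq_abs] at this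
  set f : M → ℝ := fun t => if h : t = y then 0 else dist t y * g (stoneCechUnit ⟨(t, y), h⟩)
    with hfdef
  have hfy : f y = 0 := dif_pos rfl
  have hfne : ∀ (t : M) (h : t ≠ y), f t = dist t y * g (stoneCechUnit ⟨(t, y), h⟩) :=
    fun t h => dif_neg h
  have key : ∀ (u v : M) (h : u ≠ v), f u - f v ≤ dist u v * g (stoneCechUnit ⟨(u, v), h⟩) := by
    intro u v h
    by_cases hv : v = y
    · subst hv
      rw [hfy, hfne u h, sub_zero]
    · by_cases hu : u = y
      · subst hu
        rw [hfy, hfne v hv, zero_sub]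
        have h0 := aux_gA h3 hgG (Ne.symm hv)
        have hdc : dist y v = dist v y := dist_comm y v
        have hdn : (0:ℝ) ≤ dist v y := dist_nonneg
        -- goal : -(dist v y * g (ι (v,y))) ≤ dist y v * g (ι (y,v))
        rw [hdc]
        nlinarith [h0, hdn]
      · rw [hfne u hu, hfne v hv]
        have := hgG u v y h hv hu
        linarith
  have hCnn : (0:ℝ) ≤ C := le_trans (abs_nonneg _) (hC' (stoneCechUnit p))
  have hCoe : ((Real.toNNReal C : NNReal) : ℝ) = C := Real.coe_toNNReal C hCnn
  have hlip : LipschitzWith (Real.toNNReal C) f := by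
    apply LipschitzWith.of_dist_le_mul
    intro u v
    rcases eq_or_ne u v with rfl | h
    · simp
    · rw [Real.dist_eq, hCoe, abs_sub_le_iff]
      have h1 := key u v h
      have h2 := key v u (Ne.symm h)
      have b1 : g (stoneCechUnit ⟨(u, v), h⟩) ≤ C :=
        le_trans (le_abs_self _) (hC' _)
      have b2 : g (stoneCechUnit ⟨(v, u), Ne.symm h⟩) ≤ C :=
        le_trans (le_abs_self _) (hC' _)
      have hdn : (0:ℝ) ≤ dist u v := dist_nonneg
      have hdc : dist v u = dist u v := dist_comm v u
      constructor
      · nlinarith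
      · rw [hdc] at h2; nlinarith
  set fn : M → ℝ := fun t => f t - f basept with hfndef
  have hlipn : LipschitzWith (Real.toNNReal C) fn := by
    apply LipschitzWith.of_dist_le_mul
    intro u v
    have : dist (fn u) (fn v) = dist (f u) (f v) := by
      simp only [hfndef, Real.dist_eq, sub_sub_sub_cancel_right]
    rw [this]
    exact hlip.dist_le_mul u v
  obtain ⟨F, hFc, hFe⟩ := aux_exists_ext fn (Real.toNNReal C) hlipn
  have hint := hrep fn ⟨Real.toNNReal C, hlipn⟩ (sub_self _) F hFc hFe
  have hval : (fn p.1.1 - fn p.1.2) / dist p.1.1 p.1.2 = g (stoneCechUnit p) := by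
    have h1 : fn p.1.1 - fn p.1.2 = f x - f y := by simp [hfndef]; rfl
    rw [h1, hfy, sub_zero, hfne x hxy, ← hx, ← hy, mul_div_assoc, mul_comm, div_mul_cancel₀ _ hD.ne']
  have hle : ∀ ζ, F ζ ≤ g ζ := by
    apply aux_le_of_unit hFc hgc
    intro q
    rw [hFe q]
    have h1 : fn q.1.1 - fn q.1.2 = f q.1.1 - f q.1.2 := by simp [hfndef]
    rw [h1, div_le_iff₀ (dist_pos.2 q.2), mul_comm]
    exact key q.1.1 q.1.2 q.2
  have hgint : Integrable g μ :=
    hgc.integrable_of_hasCompactSupport (HasCompactSupport.of_compactSpace g)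
  have hFint : Integrable F μ :=
    hFc.integrable_of_hasCompactSupport (HasCompactSupport.of_compactSpace F)
  calc g (stoneCechUnit p) = ∫ ζ, F ζ ∂μ := by rw [hint, hval]
    _ ≤ ∫ ζ, g ζ ∂μ := integral_mono hFint hgint hle

theorem aux_dirac_innerRegular {α : Type*} [TopologicalSpace α] [MeasurableSpace α] (a : α) :
    (Measure.dirac a).InnerRegular := by
  constructor
  intro U hU r hr
  by_cases h : a ∈ U
  · refine ⟨{a}, Set.singleton_subset_iff.2 h, isCompact_singleton, ?_⟩
    rw [Measure.dirac_apply_of_mem (Set.mem_singleton a)]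
    rwa [Measure.dirac_apply_of_mem h] at hr
  · rw [Measure.dirac_apply' _ hU, Set.indicator_of_notMem h] at hr
    exact absurd hr (by simp)

theorem aux_rep_of_preceq [MeasurableSpace (StoneCech (Wt M))] [BorelSpace (StoneCech (Wt M))]
    (basept : M) (p : Wt M) (ν : Measure (StoneCech (Wt M))) (hfin : IsFiniteMeasure ν)
    (hpre : Preceq ν (Measure.dirac (stoneCechUnit p))) :
    RepresentsMolecule basept p ν := by
  intro f hf hf0 F hFc hFe
  have hkey : ∀ (u v : M) (h : u ≠ v),
      dist u v * F (stoneCechUnit ⟨(u, v), h⟩) = f u - f v := by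
    intro u v h
    rw [hFe ⟨(u, v), h⟩, mul_comm, div_mul_cancel₀ _ (dist_pos.2 h).ne']
  have hmemF : F ∈ GSet M := by
    refine ⟨hFc, fun a b c hab hbc hac => ?_⟩
    simp only []
    rw [hkey a c hac, hkey a b hab, hkey b c hbc]
    exact le_of_eq (by ring)
  have hmemF' : (fun ζ => -F ζ) ∈ GSet M := by
    refine ⟨hFc.neg, fun a b c hab hbc hac => ?_⟩
    simp only []
    rw [mul_neg, mul_neg, mul_neg, hkey a c hac, hkey a b hab, hkey b c hbc]
    exact le_of_eq (by ring)
  have h1 := hpre F hmemF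
  have h2 := hpre _ hmemF'
  rw [integral_dirac' F _ hFc.stronglyMeasurable] at h1
  simp only [integral_dirac' (fun ζ => -F ζ) _ hFc.neg.stronglyMeasurable] at h2
  rw [integral_neg] at h2
  have hFp : F (stoneCechUnit p) = (f p.1.1 - f p.1.2) / dist p.1.1 p.1.2 := hFe p
  rw [hFp] at h1 h2
  linarith [h1, h2]

theorem aux_key (p : Wt M) (ζ : StoneCech (Wt M))
    (H : ∀ (f : M → ℝ) (C : NNReal), LipschitzWith C f →
      ∀ F : StoneCech (Wt M) → ℝ, Continuous F →
        (∀ q : Wt M, F (stoneCechUnit q) = (f q.1.1 - f q.1.2) / dist q.1.1 q.1.2) →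
        F ζ = F (stoneCechUnit p)) :
    ζ = stoneCechUnit p := by
  have hxy : p.1.1 ≠ p.1.2 := p.2
  set x := p.1.1 with hx
  set y := p.1.2 with hy
  have hD : (0:ℝ) < dist x y := dist_pos.2 hxy
  -- an ultrafilter on W pushing to ζ
  have hζcl : ζ ∈ closure (Set.range (stoneCechUnit : Wt M → StoneCech (Wt M))) :=
    denseRange_stoneCechUnit ζ
  haveI hne : (Filter.comap (stoneCechUnit : Wt M → StoneCech (Wt M)) (nhds ζ)).NeBot := by
    rw [Filter.comap_neBot_iff]
    intro t ht
    obtain ⟨z, hzt, q, rfl⟩ := mem_closure_iff_nhds.1 hζcl t ht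
    exact ⟨q, hzt⟩
  set ξ : Ultrafilter (Wt M) :=
    Ultrafilter.of (Filter.comap (stoneCechUnit : Wt M → StoneCech (Wt M)) (nhds ζ)) with hξ
  have hξι : Filter.Tendsto (stoneCechUnit : Wt M → StoneCech (Wt M)) (↑ξ) (nhds ζ) :=
    le_trans (Filter.map_mono (Ultrafilter.of_le _)) Filter.map_comap_le
  -- limits of difference quotients along ξ
  have hlim : ∀ (f : M → ℝ) (C : NNReal), LipschitzWith C f →
      Filter.Tendsto (fun q : Wt M => (f q.1.1 - f q.1.2) / dist q.1.1 q.1.2) (↑ξ)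
        (nhds ((f x - f y) / dist x y)) := by
    intro f C hf
    obtain ⟨F, hFc, hFe⟩ := aux_exists_ext f C hf
    have h1 : F ζ = (f x - f y) / dist x y := by rw [H f C hf F hFc hFe]; exact hFe p
    have h2 : Filter.Tendsto (fun q : Wt M => F (stoneCechUnit q)) (↑ξ) (nhds (F ζ)) :=
      (hFc.tendsto ζ).comp hξι
    rw [h1] at h2
    simpa only [hFe] using h2
  -- first coordinate tends to x
  have hu : ∀ ε > (0:ℝ), ∀ᶠ q : Wt M in ↑ξ, dist q.1.1 x < ε := by
    intro ε hε
    by_contra hcon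
    have hev : ∀ᶠ q : Wt M in ↑ξ, ε ≤ dist q.1.1 x := by
      have := Ultrafilter.eventually_not.2 hcon
      filter_upwards [this] with q hq using not_lt.1 hq
    set r := min ε (dist x y) / 2 with hr
    have hr0 : 0 < r := by positivity
    have hrε : r < ε := by
      have : min ε (dist x y) ≤ ε := min_le_left _ _
      simp only [hr]; linarith
    have hrD : r < dist x y := by
      have : min ε (dist x y) ≤ dist x y := min_le_right _ _
      simp only [hr]; linarith
    have h2 := hlim (fun t => dist t x) 1 (LipschitzWith.dist_left x)
    have hlv : (dist x x - dist y x) / dist x y = -1 := by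
      rw [dist_self, dist_comm y x, zero_sub, neg_div, div_self hD.ne']
    rw [hlv] at h2
    have hev2 := h2.eventually_lt_const (show (-1:ℝ) < 0 by norm_num)
    have h3 := hlim (fun t => min (dist t x) r) 1 ((LipschitzWith.dist_left x).min_const r)
    have hlv3 : (min (dist x x) r - min (dist y x) r) / dist x y = -(r / dist x y) := by
      rw [dist_self, dist_comm y x, min_eq_left hr0.le, min_eq_right hrD.le, zero_sub, neg_div]
    rw [hlv3] at h3
    have hev3 := h3.eventually_lt_const (show -(r / dist x y) < 0 from neg_neg_iff_pos.2 (by positivity))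
    obtain ⟨q, hq1, hq2, hq3⟩ := (hev.and (hev2.and hev3)).exists
    have hdq : (0:ℝ) < dist q.1.1 q.1.2 := dist_pos.2 q.2
    have hnum : dist q.1.1 x - dist q.1.2 x < 0 := by
      by_contra h'
      push_neg at h'
      exact absurd hq2 (not_lt.2 (div_nonneg h' hdq.le))
    have e1 : min (dist q.1.1 x) r = r := min_eq_right (by linarith)
    have e2 : min (dist q.1.2 x) r = r := min_eq_right (by linarith)
    simp only [e1, e2, sub_self, zero_div] at hq3
    exact lt_irrefl 0 hq3
  -- second coordinate tends to y
  have hv : ∀ ε > (0:ℝ), ∀ᶠ q : Wt M in ↑ξ, dist q.1.2 y < ε := by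
    intro ε hε
    by_contra hcon
    have hev : ∀ᶠ q : Wt M in ↑ξ, ε ≤ dist q.1.2 y := by
      have := Ultrafilter.eventually_not.2 hcon
      filter_upwards [this] with q hq using not_lt.1 hq
    set r := min ε (dist x y) / 2 with hr
    have hr0 : 0 < r := by positivity
    have hrε : r < ε := by
      have : min ε (dist x y) ≤ ε := min_le_left _ _
      simp only [hr]; linarith
    have hrD : r < dist x y := by
      have : min ε (dist x y) ≤ dist x y := min_le_right _ _
      simp only [hr]; linarith
    have h2 := hlim (fun t => dist t y) 1 (LipschitzWith.dist_left y)
    have hlv : (dist x y - dist y y) / dist x y = 1 := by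
      rw [dist_self, sub_zero, div_self hD.ne']
    rw [hlv] at h2
    have hev2 := h2.eventually_const_lt (show (0:ℝ) < 1 by norm_num)
    have h3 := hlim (fun t => min (dist t y) r) 1 ((LipschitzWith.dist_left y).min_const r)
    have hlv3 : (min (dist x y) r - min (dist y y) r) / dist x y = r / dist x y := by
      rw [dist_self, min_eq_left hr0.le, min_eq_right hrD.le, sub_zero]
    rw [hlv3] at h3
    have hev3 := h3.eventually_const_lt (show (0:ℝ) < r / dist x y by positivity)
    obtain ⟨q, hq1, hq2, hq3⟩ := (hev.and (hev2.and hev3)).exists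
    have hdq : (0:ℝ) < dist q.1.1 q.1.2 := dist_pos.2 q.2
    have hnum : 0 < dist q.1.1 y - dist q.1.2 y := by
      by_contra h'
      push_neg at h'
      have : (dist q.1.1 y - dist q.1.2 y) / dist q.1.1 q.1.2 ≤ 0 :=
        div_nonpos_of_nonpos_of_nonneg (by linarith) hdq.le
      exact absurd hq2 (not_lt.2 this)
    have e1 : min (dist q.1.1 y) r = r := min_eq_right (by linarith)
    have e2 : min (dist q.1.2 y) r = r := min_eq_right (by linarith)
    simp only [e1, e2, sub_self, zero_div] at hq3
    exact lt_irrefl _ hq3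
  -- conclude
  have hval : Filter.Tendsto (fun q : Wt M => (q : M × M)) (↑ξ) (nhds ((p : M × M))) := by
    rw [Metric.tendsto_nhds]
    intro ε hε
    filter_upwards [hu ε hε, hv ε hε] with q h1 h2
    rw [Prod.dist_eq]
    exact max_lt h1 h2
  have htend : Filter.Tendsto (fun q : Wt M => q) (↑ξ) (nhds p) := by
    rw [Topology.IsEmbedding.subtypeVal.tendsto_nhds_iff]
    exact hval
  have h2 : Filter.Tendsto (stoneCechUnit : Wt M → StoneCech (Wt M)) (↑ξ)
      (nhds (stoneCechUnit p)) := (continuous_stoneCechUnit.tendsto p).comp htend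
  exact tendsto_nhds_unique hξι h2

theorem aux_sep (p : Wt M) (ζ : StoneCech (Wt M)) (hne : ζ ≠ stoneCechUnit p) :
    ∃ g ∈ GSet M, (∀ ζ', 0 ≤ g ζ') ∧ g (stoneCechUnit p) = 0 ∧ 0 < g ζ := by
  have hxy : p.1.1 ≠ p.1.2 := p.2
  set x := p.1.1 with hx
  set y := p.1.2 with hy
  have hD : (0:ℝ) < dist x y := dist_pos.2 hxy
  obtain ⟨F1, hF1c, hF1e⟩ := aux_exists_ext (fun t => dist t y) 1 (LipschitzWith.dist_left y)
  have hF1p : F1 (stoneCechUnit p) = 1 := by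
    rw [hF1e p]
    show (dist x y - dist y y) / dist x y = 1
    rw [dist_self, sub_zero, div_self hD.ne']
  have hF1key : ∀ (u v : M) (h : u ≠ v),
      dist u v * F1 (stoneCechUnit ⟨(u, v), h⟩) = dist u y - dist v y := by
    intro u v h
    rw [hF1e ⟨(u, v), h⟩, mul_comm, div_mul_cancel₀ _ (dist_pos.2 h).ne']
  have hF1le : ∀ ζ', F1 ζ' ≤ 1 := by
    apply aux_le_of_unit hF1c continuous_const
    intro q
    rw [hF1e q, div_le_one (dist_pos.2 q.2)]
    have := dist_triangle q.1.1 q.1.2 y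
    linarith
  by_cases hζ1 : F1 ζ = 1
  · -- use an arbitrary distinguishing Lipschitz function
    have hx' : ¬ (∀ (f : M → ℝ) (C : NNReal), LipschitzWith C f →
        ∀ F : StoneCech (Wt M) → ℝ, Continuous F →
          (∀ q : Wt M, F (stoneCechUnit q) = (f q.1.1 - f q.1.2) / dist q.1.1 q.1.2) →
          F ζ = F (stoneCechUnit p)) := fun H => hne (aux_key p ζ H)
    push_neg at hx'
    obtain ⟨f, C, hf, F, hFc, hFe, hFne⟩ := hx'
    set a := F (stoneCechUnit p) with ha
    have hFkey : ∀ (u v : M) (h : u ≠ v),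
        dist u v * F (stoneCechUnit ⟨(u, v), h⟩) = f u - f v := by
      intro u v h
      rw [hFe ⟨(u, v), h⟩, mul_comm, div_mul_cancel₀ _ (dist_pos.2 h).ne']
    refine ⟨fun ζ' => |F ζ' - a * F1 ζ'|, ⟨(hFc.sub (continuous_const.mul hF1c)).abs, ?_⟩,
      fun ζ' => abs_nonneg _, ?_, ?_⟩
    · intro b c e hbc hce hbe
      simp only []
      rw [← abs_of_nonneg (dist_nonneg : (0:ℝ) ≤ dist b e), ← abs_mul]
      rw [← abs_of_nonneg (dist_nonneg : (0:ℝ) ≤ dist b c), ← abs_mul]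
      rw [← abs_of_nonneg (dist_nonneg : (0:ℝ) ≤ dist c e), ← abs_mul]
      rw [mul_sub, mul_sub, mul_sub]
      rw [mul_left_comm (dist b e), mul_left_comm (dist b c), mul_left_comm (dist c e)]
      rw [hFkey b e hbe, hFkey b c hbc, hFkey c e hce,
        hF1key b e hbe, hF1key b c hbc, hF1key c e hce]
      have hsum : f b - f e - a * (dist b y - dist e y) =
          (f b - f c - a * (dist b y - dist c y)) + (f c - f e - a * (dist c y - dist e y)) := by
        ring
      rw [hsum]
      exact abs_add_le _ _
    · show |F (stoneCechUnit p) - a * F1 (stoneCechUnit p)| = 0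
      rw [hF1p, mul_one, ← ha, sub_self, abs_zero]
    · show 0 < |F ζ - a * F1 ζ|
      rw [hζ1, mul_one]
      exact abs_pos.2 (sub_ne_zero.2 hFne)
  · -- 1 - F1 works
    refine ⟨fun ζ' => 1 - F1 ζ', ⟨continuous_const.sub hF1c, ?_⟩,
      fun ζ' => by show (0:ℝ) ≤ 1 - F1 ζ'; linarith [hF1le ζ'],
      by show (1:ℝ) - F1 (stoneCechUnit p) = 0; rw [hF1p]; ring, ?_⟩
    · intro b c e hbc hce hbe
      simp only []
      rw [mul_sub, mul_sub, mul_sub, mul_one, mul_one, mul_one,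
        hF1key b e hbe, hF1key b c hbc, hF1key c e hce]
      have := dist_triangle b c e
      linarith
    · show (0:ℝ) < 1 - F1 ζ
      have h1 := hF1le ζ
      have : F1 ζ < 1 := lt_of_le_of_ne h1 hζ1
      linarith

end Stmt19Aux

theorem stmt19 {M : Type*} [MetricSpace M]
    [MeasurableSpace (StoneCech (Wt M))] [BorelSpace (StoneCech (Wt M))]
    (basept : M) (h3 : ∃ x y z : M, x ≠ y ∧ x ≠ z ∧ y ≠ z)
    (p : Wt M) :
    (∀ μ : Measure (StoneCech (Wt M)), IsFiniteMeasure μ → μ.InnerRegular →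
      RepresentsMolecule basept p μ → Preceq (Measure.dirac (stoneCechUnit p)) μ) ∧
    IsMinimal (Measure.dirac (stoneCechUnit p)) ∧
    (∀ μ : Measure (StoneCech (Wt M)), IsFiniteMeasure μ → μ.InnerRegular →
      IsMinimal μ → RepresentsMolecule basept p μ →
      μ = Measure.dirac (stoneCechUnit p)) := by
  classical
  have part1 : ∀ μ : Measure (StoneCech (Wt M)), IsFiniteMeasure μ →
      RepresentsMolecule basept p μ → Preceq (Measure.dirac (stoneCechUnit p)) μ :=
    fun μ hfin hrep => aux_part1 basept h3 p μ hfin hrep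
  refine ⟨fun μ hfin hreg hrep => part1 μ hfin hrep, ?_, ?_⟩
  · intro ν hfin hreg hνδ
    exact part1 ν hfin (aux_rep_of_preceq basept p ν hfin hνδ)
  · intro μ hfin hreg hmin hrep
    set ζ0 := stoneCechUnit p with hζ0
    have hδμ := part1 μ hfin hrep
    have hμδ : Preceq μ (Measure.dirac ζ0) :=
      hmin _ inferInstance (aux_dirac_innerRegular _) hδμ
    -- the total mass of μ is 1
    have honeG : (fun _ : StoneCech (Wt M) => (1:ℝ)) ∈ GSet M := by
      refine ⟨continuous_const, fun a b c hab hbc hac => ?_⟩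
      show dist a c * (1:ℝ) ≤ dist a b * 1 + dist b c * 1
      simpa using dist_triangle a b c
    have h1 := hμδ _ honeG
    have h2 := hδμ _ honeG
    simp only [integral_const, smul_eq_mul, mul_one, measureReal_def, measure_univ, ENNReal.toReal_one] at h1 h2
    have hone : μ Set.univ = 1 :=
      (ENNReal.toReal_eq_one_iff _).1 (le_antisymm h1 h2)
    -- compact sets avoiding ζ0 are null
    have hcnull : ∀ C : Set (StoneCech (Wt M)), IsCompact C → ζ0 ∉ C → μ C = 0 := by
      intro C hC h0
      have hsep : ∀ ζ' : StoneCech (Wt M), ζ' ∈ C →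
          ∃ g ∈ GSet M, (∀ ζ'', 0 ≤ g ζ'') ∧ g ζ0 = 0 ∧ 0 < g ζ' :=
        fun ζ' hζ' => aux_sep p ζ' (fun e => h0 (by rw [hζ0, ← e]; exact hζ'))
      choose! g hgG hgnn hg0 hgpos using hsep
      have hcover : C ⊆ ⋃ ζ' ∈ C, {ζ'' | 0 < g ζ' ζ''} :=
        fun ζ' h => Set.mem_biUnion h (hgpos ζ' h)
      obtain ⟨b, hbsub, hbfin, hbcov⟩ := hC.elim_finite_subcover_image
        (fun i hi => isOpen_lt continuous_const (hgG i hi).1) hcover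
      set G : StoneCech (Wt M) → ℝ := fun ζ'' => ∑ i ∈ hbfin.toFinset, g i ζ'' with hGdef
      have hmem : ∀ i ∈ hbfin.toFinset, i ∈ C := fun i hi => hbsub (hbfin.mem_toFinset.1 hi)
      have hGc : Continuous G :=
        continuous_finset_sum _ (fun i hi => (hgG i (hmem i hi)).1)
      have hGmem : G ∈ GSet M := by
        refine ⟨hGc, fun a b' c hab hbc hac => ?_⟩
        show dist a c * G (stoneCechUnit ⟨(a, c), hac⟩) ≤
          dist a b' * G (stoneCechUnit ⟨(a, b'), hab⟩) +
            dist b' c * G (stoneCechUnit ⟨(b', c), hbc⟩)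
        simp only [hGdef, Finset.mul_sum, ← Finset.sum_add_distrib]
        exact Finset.sum_le_sum fun i hi => (hgG i (hmem i hi)).2 a b' c hab hbc hac
      have hle := hμδ G hGmem
      rw [integral_dirac' G _ hGc.stronglyMeasurable] at hle
      have hG0 : G ζ0 = 0 := Finset.sum_eq_zero fun i hi => hg0 i (hmem i hi)
      have hGnn : ∀ ζ'', 0 ≤ G ζ'' :=
        fun ζ'' => Finset.sum_nonneg fun i hi => hgnn i (hmem i hi) ζ''
      have hGint : Integrable G μ :=
        hGc.integrable_of_hasCompactSupport (HasCompactSupport.of_compactSpace G)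
      have hzero : ∫ ζ'', G ζ'' ∂μ = 0 :=
        le_antisymm (by rw [hG0] at hle; exact hle) (integral_nonneg hGnn)
      have hae : G =ᵐ[μ] 0 := (integral_eq_zero_iff_of_nonneg hGnn hGint).1 hzero
      have hnullset : μ {ζ'' | G ζ'' ≠ 0} = 0 := by
        have h' := hae
        rw [Filter.EventuallyEq, ae_iff] at h'
        simpa using h'
      apply measure_mono_null _ hnullset
      intro ζ'' hζ''C
      obtain ⟨i, hib, hgi⟩ := Set.mem_iUnion₂.1 (hbcov hζ''C)
      have hpos : 0 < G ζ'' :=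
        Finset.sum_pos' (fun j hj => hgnn j (hmem j hj) ζ'')
          ⟨i, hbfin.mem_toFinset.2 hib, hgi⟩
      exact ne_of_gt hpos
    -- μ vanishes off ζ0
    have hUm : MeasurableSet ({ζ0}ᶜ : Set (StoneCech (Wt M))) :=
      (isClosed_singleton.measurableSet).compl
    have hcompl : μ {ζ0}ᶜ = 0 := by
      by_contra h
      obtain ⟨C, hCsub, hCcomp, hCpos⟩ := hreg.innerRegular hUm 0 (pos_iff_ne_zero.2 h)
      have : μ C = 0 := hcnull C hCcomp (fun hin => (hCsub hin) rfl)
      rw [this] at hCpos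
      exact lt_irrefl 0 hCpos
    ext s hs
    rw [Measure.dirac_apply' _ hs]
    by_cases h : ζ0 ∈ s
    · rw [Set.indicator_of_mem h]
      have hsc : μ sᶜ = 0 := by
        refine measure_mono_null (fun z hz => ?_) hcompl
        intro e
        rw [Set.mem_singleton_iff] at e
        subst e
        exact hz h
      have hsum := measure_add_measure_compl (μ := μ) hs
      rw [hsc, add_zero, hone] at hsum
      simpa using hsum
    · rw [Set.indicator_of_notMem h]
      refine measure_mono_null (fun z hz => ?_) hcompl
      intro e
      rw [Set.mem_singleton_iff] at e
      subst e
      exact h hz
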